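/- If G is an O-game, then G + G + G is not an O-game. -/

import Mathlib

/-- Three-player impartial games: well-founded game trees. -/
inductive G3 : Type 1 where
  | mk : (ι : Type) → (ι → G3) → G3

namespace G3

/-- The index type of options (moves) of a game. -/
def moves : G3 → Type
  | mk ι _ => ι

/-- The option of a game corresponding to a move. -/
def moveFn : (g : G3) → moves g → G3
  | mk _ f => f

/-- Disjunctive sum: move in exactly one component. -/
noncomputable def add : G3 → G3 → G3 :=
  G3.rec (fun ι f ihf =>
    G3.rec (fun κ g ihg =>
      mk (ι ⊕ κ) (fun x =>
        match x with
        | Sum.inl i => ihf i (mk κ g)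
        | Sum.inr j => ihg j)))

/-- The four outcome types of a three-player impartial game. -/
inductive PType : Type
  | N | O | P | Q
deriving DecidableEq

open Classical in
/-- The type of a game: `N` iff some option is a `P`-game; `O` iff it has at least
one option and all options are `N`-games; `P` iff all options are `O`-games;
`Q` otherwise. -/
noncomputable def typ : G3 → PType
  | mk ι f =>
    if ∃ i, typ (f i) = PType.P then PType.N
    else if Nonempty ι ∧ ∀ i, typ (f i) = PType.N then PType.O
    else if ∀ i, typ (f i) = PType.O then PType.P
    else PType.Q

/-- The Nim heap of size `n`: options are heaps of sizes `0, …, n-1`. -/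
def nim : ℕ → G3
  | n => mk (Fin n) (fun i => nim i)
termination_by n => n
decreasing_by exact i.isLt

/-- The sum of `n` Nim heaps of size 1. -/
noncomputable def ones : ℕ → G3
  | 0 => nim 0
  | n + 1 => add (ones n) (nim 1)

theorem add_mk {ι : Type} {f : ι → G3} {κ : Type} {g : κ → G3} :
    add (mk ι f) (mk κ g) = mk (ι ⊕ κ) (fun x =>
      match x with
      | Sum.inl i => add (f i) (mk κ g)
      | Sum.inr j => add (mk ι f) (g j)) := rfl

open PType

theorem ptype_cases (t : PType) : t = N ∨ t = O ∨ t = P ∨ t = Q := by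
  cases t <;> simp

theorem typ_N_iff {X : G3} : typ X = N ↔ ∃ i, typ (moveFn X i) = P := by
  cases X with
  | mk ι f =>
    classical
    show (if ∃ i, typ (f i) = PType.P then PType.N
      else if Nonempty ι ∧ ∀ i, typ (f i) = PType.N then PType.O
      else if ∀ i, typ (f i) = PType.O then PType.P
      else PType.Q) = N ↔ _
    split_ifs with h1 h2 h3 <;> simp_all [moveFn, moves] <;> tauto

theorem typ_O_iff {X : G3} : typ X = O ↔
    (¬ ∃ i, typ (moveFn X i) = P) ∧ Nonempty (moves X) ∧ ∀ i, typ (moveFn X i) = N := by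
  cases X with
  | mk ι f =>
    classical
    show (if ∃ i, typ (f i) = PType.P then PType.N
      else if Nonempty ι ∧ ∀ i, typ (f i) = PType.N then PType.O
      else if ∀ i, typ (f i) = PType.O then PType.P
      else PType.Q) = O ↔ _
    split_ifs with h1 h2 h3 <;> simp_all [moveFn, moves] <;> tauto

theorem typ_P_iff {X : G3} : typ X = P ↔
    (¬ ∃ i, typ (moveFn X i) = P) ∧ ¬ (Nonempty (moves X) ∧ ∀ i, typ (moveFn X i) = N)
      ∧ ∀ i, typ (moveFn X i) = O := by
  cases X with
  | mk ι f =>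
    classical
    show (if ∃ i, typ (f i) = PType.P then PType.N
      else if Nonempty ι ∧ ∀ i, typ (f i) = PType.N then PType.O
      else if ∀ i, typ (f i) = PType.O then PType.P
      else PType.Q) = P ↔ _
    split_ifs with h1 h2 h3 <;> simp_all [moveFn, moves] <;> tauto

theorem typ_Q_iff {X : G3} : typ X = Q ↔
    (¬ ∃ i, typ (moveFn X i) = P) ∧ ¬ (Nonempty (moves X) ∧ ∀ i, typ (moveFn X i) = N)
      ∧ ¬ ∀ i, typ (moveFn X i) = O := by
  cases X with
  | mk ι f =>
    classical
    show (if ∃ i, typ (f i) = PType.P then PType.N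
      else if Nonempty ι ∧ ∀ i, typ (f i) = PType.N then PType.O
      else if ∀ i, typ (f i) = PType.O then PType.P
      else PType.Q) = Q ↔ _
    split_ifs with h1 h2 h3 <;> simp_all [moveFn, moves] <;> tauto

-- helpers
theorem O_ne {X : G3} (h : typ X = O) : Nonempty (moves X) := (typ_O_iff.mp h).2.1
theorem O_all {X : G3} (h : typ X = O) (i : moves X) : typ (moveFn X i) = N :=
  (typ_O_iff.mp h).2.2 i
theorem P_all {X : G3} (h : typ X = P) (i : moves X) : typ (moveFn X i) = O :=
  (typ_P_iff.mp h).2.2 i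
theorem N_opt {X : G3} (h : typ X = N) : ∃ i, typ (moveFn X i) = P := typ_N_iff.mp h
theorem Q_noP {X : G3} (h : typ X = Q) (i : moves X) : typ (moveFn X i) ≠ P :=
  fun hp => (typ_Q_iff.mp h).1 ⟨i, hp⟩
theorem Q_ne {X : G3} (h : typ X = Q) : Nonempty (moves X) := by
  by_contra hne
  exact (typ_Q_iff.mp h).2.2 (fun i => absurd ⟨i⟩ hne)
theorem Q_exists_nonN {X : G3} (h : typ X = Q) : ∃ i, typ (moveFn X i) ≠ N := by
  have := (typ_Q_iff.mp h).2.1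
  push_neg at this
  exact this (Q_ne h)
theorem Q_exists_nonO {X : G3} (h : typ X = Q) : ∃ i, typ (moveFn X i) ≠ O := by
  have := (typ_Q_iff.mp h).2.2
  push_neg at this
  exact this

-- options of sums
theorem typ_add_N_elim {X Y : G3} (h : typ (add X Y) = N) :
    (∃ i, typ (add (moveFn X i) Y) = P) ∨ (∃ j, typ (add X (moveFn Y j)) = P) := by
  cases X with
  | mk ι f =>
    cases Y with
    | mk κ g =>
      obtain ⟨x, hx⟩ := typ_N_iff.mp h
      rcases x with i | j
      · exact Or.inl ⟨i, hx⟩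
      · exact Or.inr ⟨j, hx⟩

theorem typ_add_O_left {X Y : G3} (h : typ (add X Y) = O) (i : moves X) :
    typ (add (moveFn X i) Y) = N := by
  cases X with
  | mk ι f =>
    cases Y with
    | mk κ g => exact (typ_O_iff.mp h).2.2 (Sum.inl i)

theorem typ_add_O_right {X Y : G3} (h : typ (add X Y) = O) (j : moves Y) :
    typ (add X (moveFn Y j)) = N := by
  cases X with
  | mk ι f =>
    cases Y with
    | mk κ g => exact (typ_O_iff.mp h).2.2 (Sum.inr j)

theorem typ_add_P_left {X Y : G3} (h : typ (add X Y) = P) (i : moves X) :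
    typ (add (moveFn X i) Y) = O := by
  cases X with
  | mk ι f =>
    cases Y with
    | mk κ g => exact (typ_P_iff.mp h).2.2 (Sum.inl i)

theorem typ_add_P_right {X Y : G3} (h : typ (add X Y) = P) (j : moves Y) :
    typ (add X (moveFn Y j)) = O := by
  cases X with
  | mk ι f =>
    cases Y with
    | mk κ g => exact (typ_P_iff.mp h).2.2 (Sum.inr j)

theorem nonempty_add_elim {X Y : G3} (h : Nonempty (moves (add X Y))) :
    Nonempty (moves X) ∨ Nonempty (moves Y) := by
  cases X with
  | mk ι f =>
    cases Y with
    | mk κ g =>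
      obtain ⟨x⟩ := h
      rcases x with i | j
      · exact Or.inl ⟨i⟩
      · exact Or.inr ⟨j⟩

theorem typ_add_ne_N {X Y : G3} (h1 : ∀ i, typ (add (moveFn X i) Y) ≠ P)
    (h2 : ∀ j, typ (add X (moveFn Y j)) ≠ P) : typ (add X Y) ≠ N := by
  intro h
  rcases typ_add_N_elim h with ⟨i, hi⟩ | ⟨j, hj⟩
  · exact h1 i hi
  · exact h2 j hj

theorem typ_add_ne_O_left {X Y : G3} (i : moves X) (h : typ (add (moveFn X i) Y) ≠ N) :
    typ (add X Y) ≠ O := fun hO => h (typ_add_O_left hO i)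

theorem typ_add_ne_O_right {X Y : G3} (j : moves Y) (h : typ (add X (moveFn Y j)) ≠ N) :
    typ (add X Y) ≠ O := fun hO => h (typ_add_O_right hO j)

theorem typ_add_ne_P_left {X Y : G3} (i : moves X) (h : typ (add (moveFn X i) Y) ≠ O) :
    typ (add X Y) ≠ P := fun hP => h (typ_add_P_left hP i)

theorem typ_add_ne_P_right {X Y : G3} (j : moves Y) (h : typ (add X (moveFn Y j)) ≠ O) :
    typ (add X Y) ≠ P := fun hP => h (typ_add_P_right hP j)

-- equivalence (bisimulation by option types)
def EV : G3 → G3 → Prop :=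
  G3.rec (motive := fun _ => G3 → Prop)
    (fun _ι _f ih y =>
      (∀ i, ∃ j, ih i (moveFn y j)) ∧ (∀ j : moves y, ∃ i, ih i (moveFn y j)))

theorem EV_iff {x y : G3} : EV x y ↔
    (∀ i, ∃ j, EV (moveFn x i) (moveFn y j)) ∧
      (∀ j : moves y, ∃ i, EV (moveFn x i) (moveFn y j)) := by
  cases x with
  | mk ι f => exact Iff.rfl

theorem EV_refl (x : G3) : EV x x := by
  induction x with
  | mk ι f ih => exact EV_iff.mpr ⟨fun i => ⟨i, ih i⟩, fun j => ⟨j, ih j⟩⟩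

theorem EV_symm : ∀ {x y : G3}, EV x y → EV y x := by
  intro x
  induction x with
  | mk ι f ih =>
    intro y h
    obtain ⟨h1, h2⟩ := EV_iff.mp h
    refine EV_iff.mpr ⟨fun j => ?_, fun i => ?_⟩
    · obtain ⟨i, hi⟩ := h2 j
      exact ⟨i, ih i hi⟩
    · obtain ⟨j, hj⟩ := h1 i
      exact ⟨j, ih i hj⟩

theorem EV_trans : ∀ {x y z : G3}, EV x y → EV y z → EV x z := by
  intro x
  induction x with
  | mk ι f ih =>
    intro y z hxy hyz
    obtain ⟨h1, h2⟩ := EV_iff.mp hxy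
    obtain ⟨k1, k2⟩ := EV_iff.mp hyz
    refine EV_iff.mpr ⟨fun i => ?_, fun l => ?_⟩
    · obtain ⟨j, hj⟩ := h1 i
      obtain ⟨l, hl⟩ := k1 j
      exact ⟨l, ih i hj hl⟩
    · obtain ⟨j, hj⟩ := k2 l
      obtain ⟨i, hi⟩ := h2 j
      exact ⟨i, ih i hi hj⟩

theorem typ_eq_of_EV : ∀ {x y : G3}, EV x y → typ x = typ y := by
  intro x
  induction x with
  | mk ι f ih =>
    intro y h
    obtain ⟨h1, h2⟩ := EV_iff.mp h
    set x := mk ι f with hx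
    have cP : (∃ i, typ (moveFn x i) = P) ↔ (∃ j, typ (moveFn y j) = P) := by
      constructor
      · rintro ⟨i, hp⟩
        obtain ⟨j, hj⟩ := h1 i
        exact ⟨j, (ih i hj) ▸ hp⟩
      · rintro ⟨j, hp⟩
        obtain ⟨i, hi⟩ := h2 j
        exact ⟨i, (ih i hi).trans hp⟩
    have cne : Nonempty (moves x) ↔ Nonempty (moves y) := by
      constructor
      · rintro ⟨i⟩; obtain ⟨j, _⟩ := h1 i; exact ⟨j⟩
      · rintro ⟨j⟩; obtain ⟨i, _⟩ := h2 j; exact ⟨i⟩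
    have cN : (∀ i, typ (moveFn x i) = N) ↔ (∀ j, typ (moveFn y j) = N) := by
      constructor
      · intro hall j
        obtain ⟨i, hi⟩ := h2 j
        exact (ih i hi) ▸ hall i
      · intro hall i
        obtain ⟨j, hj⟩ := h1 i
        exact (ih i hj).trans (hall j)
    have cO : (∀ i, typ (moveFn x i) = O) ↔ (∀ j, typ (moveFn y j) = O) := by
      constructor
      · intro hall j
        obtain ⟨i, hi⟩ := h2 j
        exact (ih i hi) ▸ hall i
      · intro hall i
        obtain ⟨j, hj⟩ := h1 i
        exact (ih i hj).trans (hall j)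
    rcases ptype_cases (typ x) with ht | ht | ht | ht <;> rw [ht]
    · obtain ⟨i, hi⟩ := typ_N_iff.mp ht
      exact (typ_N_iff.mpr (cP.mp ⟨i, hi⟩)).symm
    · obtain ⟨hnP, hne, hall⟩ := typ_O_iff.mp ht
      exact (typ_O_iff.mpr ⟨fun h' => hnP (cP.mpr h'), cne.mp hne, cN.mp hall⟩).symm
    · obtain ⟨hnP, hno, hall⟩ := typ_P_iff.mp ht
      refine (typ_P_iff.mpr ⟨fun h' => hnP (cP.mpr h'), fun ⟨hne', hall'⟩ =>
        hno ⟨cne.mpr hne', cN.mpr hall'⟩, cO.mp hall⟩).symm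
    · obtain ⟨hnP, hno, hnall⟩ := typ_Q_iff.mp ht
      refine (typ_Q_iff.mpr ⟨fun h' => hnP (cP.mpr h'), fun ⟨hne', hall'⟩ =>
        hno ⟨cne.mpr hne', cN.mpr hall'⟩, fun h' => hnall (cO.mpr h')⟩).symm

theorem EV_add_congr : ∀ (x : G3), ∀ (y x' y' : G3), EV x x' → EV y y' →
    EV (add x y) (add x' y') := by
  intro x
  induction x with
  | mk ι f ihx =>
    intro y
    induction y with
    | mk κ g ihy =>
      intro x' y' hx hy
      cases x' with
      | mk ι' f' =>
        cases y' with
        | mk κ' g' =>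
          refine EV_iff.mpr ⟨fun i => ?_, fun j => ?_⟩
          · rcases i with i | k
            · obtain ⟨j, hj⟩ := (EV_iff.mp hx).1 i
              exact ⟨Sum.inl j, ihx i (mk κ g) (f' j) (mk κ' g') hj hy⟩
            · obtain ⟨l, hl⟩ := (EV_iff.mp hy).1 k
              exact ⟨Sum.inr l, ihy k (mk ι' f') (g' l) hx hl⟩
          · rcases j with j | l
            · obtain ⟨i, hi⟩ := (EV_iff.mp hx).2 j
              exact ⟨Sum.inl i, ihx i (mk κ g) (f' j) (mk κ' g') hi hy⟩
            · obtain ⟨k, hk⟩ := (EV_iff.mp hy).2 l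
              exact ⟨Sum.inr k, ihy k (mk ι' f') (g' l) hx hk⟩

theorem EV_add_comm : ∀ (x y : G3), EV (add x y) (add y x) := by
  intro x
  induction x with
  | mk ι f ihx =>
    intro y
    induction y with
    | mk κ g ihy =>
      refine EV_iff.mpr ⟨fun i => ?_, fun j => ?_⟩
      · rcases i with i | k
        · exact ⟨Sum.inr i, ihx i (mk κ g)⟩
        · exact ⟨Sum.inl k, ihy k⟩
      · rcases j with j | l
        · exact ⟨Sum.inr j, ihy j⟩
        · exact ⟨Sum.inl l, ihx l (mk κ g)⟩

theorem EV_add_assoc : ∀ (x y z : G3), EV (add (add x y) z) (add x (add y z)) := by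
  intro x
  induction x with
  | mk ι f ihx =>
    intro y
    induction y with
    | mk κ g ihy =>
      intro z
      induction z with
      | mk μ h ihz =>
        refine EV_iff.mpr ⟨fun i => ?_, fun j => ?_⟩
        · rcases i with (i | j) | k
          · exact ⟨Sum.inl i, ihx i (mk κ g) (mk μ h)⟩
          · exact ⟨Sum.inr (Sum.inl j), ihy j (mk μ h)⟩
          · exact ⟨Sum.inr (Sum.inr k), ihz k⟩
        · rcases j with i | (j | k)
          · exact ⟨Sum.inl (Sum.inl i), ihx i (mk κ g) (mk μ h)⟩
          · exact ⟨Sum.inl (Sum.inr j), ihy j (mk μ h)⟩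
          · exact ⟨Sum.inr k, ihz k⟩

theorem typ_add_comm (x y : G3) : typ (add x y) = typ (add y x) :=
  typ_eq_of_EV (EV_add_comm x y)

theorem typ_add_assoc (x y z : G3) : typ (add (add x y) z) = typ (add x (add y z)) :=
  typ_eq_of_EV (EV_add_assoc x y z)

theorem typ_add_rot (a b c : G3) : typ (add (add a b) c) = typ (add (add a c) b) := by
  have e1 := EV_add_assoc a b c
  have e2 := EV_add_congr a (add b c) a (add c b) (EV_refl a) (EV_add_comm b c)
  have e3 := EV_symm (EV_add_assoc a c b)
  exact typ_eq_of_EV (EV_trans (EV_trans e1 e2) e3)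

-- three-summand interface
theorem typ3_O_opt1 {A B C : G3} (h : typ (add (add A B) C) = O) (i : moves A) :
    typ (add (add (moveFn A i) B) C) = N := by
  cases A with
  | mk ι f =>
    cases B with
    | mk κ g =>
      cases C with
      | mk μ e => exact (typ_O_iff.mp h).2.2 (Sum.inl (Sum.inl i))

theorem typ3_P_opt1 {A B C : G3} (h : typ (add (add A B) C) = P) (i : moves A) :
    typ (add (add (moveFn A i) B) C) = O := by
  cases A with
  | mk ι f =>
    cases B with
    | mk κ g =>
      cases C with
      | mk μ e => exact (typ_P_iff.mp h).2.2 (Sum.inl (Sum.inl i))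

theorem typ3_N_elim {A B C : G3} (h : typ (add (add A B) C) = N) :
    (∃ i, typ (add (add (moveFn A i) B) C) = P) ∨
      (∃ j, typ (add (add A (moveFn B j)) C) = P) ∨
      (∃ k, typ (add (add A B) (moveFn C k)) = P) := by
  cases A with
  | mk ι f =>
    cases B with
    | mk κ g =>
      cases C with
      | mk μ e =>
        obtain ⟨x, hx⟩ := typ_N_iff.mp h
        rcases x with (i | j) | k
        · exact Or.inl ⟨i, hx⟩
        · exact Or.inr (Or.inl ⟨j, hx⟩)
        · exact Or.inr (Or.inr ⟨k, hx⟩)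

-- well-founded machinery
def IsOption (x y : G3) : Prop := ∃ i, moveFn y i = x

theorem isOption_wf : WellFounded IsOption := by
  constructor
  intro y
  induction y with
  | mk ι f ih =>
    constructor
    rintro x ⟨i, rfl⟩
    exact ih i

def Rel2 : G3 × G3 → G3 × G3 → Prop := Relation.TransGen (Prod.GameAdd IsOption IsOption)

theorem rel2_wf : WellFounded Rel2 := (isOption_wf.prod_gameAdd isOption_wf).transGen

theorem rel2_fst {a b c : G3} (h : IsOption a b) : Rel2 (a, c) (b, c) :=
  Relation.TransGen.single (Prod.GameAdd.fst h)

theorem rel2_snd {a b c : G3} (h : IsOption b c) : Rel2 (a, b) (a, c) :=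
  Relation.TransGen.single (Prod.GameAdd.snd h)

theorem rel2_trans {p q r : G3 × G3} (h1 : Rel2 p q) (h2 : Rel2 q r) : Rel2 p r :=
  Relation.TransGen.trans h1 h2

theorem gameAdd_swap {x y : G3 × G3} (h : Prod.GameAdd IsOption IsOption x y) :
    Prod.GameAdd IsOption IsOption x.swap y.swap := by
  cases h with
  | fst h => exact Prod.GameAdd.snd h
  | snd h => exact Prod.GameAdd.fst h

theorem rel2_swap : ∀ {p q : G3 × G3}, Rel2 p q → Rel2 p.swap q.swap := by
  intro p q h
  induction h with
  | single h => exact Relation.TransGen.single (gameAdd_swap h)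
  | tail _ h2 ih => exact Relation.TransGen.tail ih (gameAdd_swap h2)

-- the table of impossible sums
structure Tbl (X Y : G3) : Prop where
  c1 : typ X = P → typ Y = O → typ (add X Y) ≠ N ∧ typ (add X Y) ≠ P
  c2 : typ X = O → typ Y = O → typ (add X Y) ≠ P ∧ typ (add X Y) ≠ O
  c3 : typ X = N → typ Y = O → typ (add X Y) ≠ O
  c4 : typ X = P → typ Y = N → typ (add X Y) ≠ P ∧ typ (add X Y) ≠ O
  c5 : typ X = P → typ Y = P → typ (add X Y) ≠ N ∧ typ (add X Y) ≠ O
  c6 : typ X = Q → typ Y = O → typ (add X Y) ≠ P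
  c7 : typ X = Q → typ Y = N → typ (add X Y) ≠ O ∧ typ (add X Y) ≠ P
  c8 : typ X = P → typ Y = Q → typ (add X Y) ≠ N ∧ typ (add X Y) ≠ O
  c9 : typ X = N → typ Y = Q → typ (add X Y) ≠ O
  c10 : typ X = N → typ Y = N → typ (add X Y) ≠ P
  c11 : typ Y = Q → typ (add X Y) ≠ P
  c12 : typ X = Q → typ Y = Q → typ (add X Y) ≠ N

theorem key (X Y : G3)
    (IH : ∀ A B : G3, Rel2 (A, B) (X, Y) → Tbl A B ∧ Tbl B A) : Tbl X Y := by
  have ihT : ∀ {A B : G3}, Rel2 (A, B) (X, Y) → Tbl A B := fun h => (IH _ _ h).1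
  have ihS : ∀ {A B : G3}, Rel2 (A, B) (X, Y) → Tbl B A := fun h => (IH _ _ h).2
  have rXi : ∀ i : moves X, Rel2 (moveFn X i, Y) (X, Y) := fun i => rel2_fst ⟨i, rfl⟩
  have rYj : ∀ j : moves Y, Rel2 (X, moveFn Y j) (X, Y) := fun j => rel2_snd ⟨j, rfl⟩
  constructor
  -- c1 : P + O
  · intro hX hY
    constructor
    · refine typ_add_ne_N (fun i => ?_) (fun j => ?_)
      · exact ((ihT (rXi i)).c2 (P_all hX i) hY).1
      · exact ((ihT (rYj j)).c4 hX (O_all hY j)).1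
    · obtain ⟨j⟩ := O_ne hY
      exact typ_add_ne_P_right j ((ihT (rYj j)).c4 hX (O_all hY j)).2
  -- c2 : O + O
  · intro hX hY
    constructor
    · obtain ⟨i⟩ := O_ne hX
      exact typ_add_ne_P_left i ((ihT (rXi i)).c3 (O_all hX i) hY)
    · intro hO
      obtain ⟨i0⟩ := O_ne hX
      obtain ⟨j0⟩ := O_ne hY
      have hN1 : typ (add (moveFn X i0) Y) = N := typ_add_O_left hO i0
      have hN2 : typ (add X (moveFn Y j0)) = N := typ_add_O_right hO j0
      -- extract B
      rcases typ_add_N_elim hN1 with ⟨b, hBP⟩ | ⟨c, hc⟩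
      swap
      · exact (ihT (rel2_trans (rel2_snd ⟨c, rfl⟩) (rXi i0))).c10
          (O_all hX i0) (O_all hY c) hc
      set B := moveFn (moveFn X i0) b with hBdef
      have rBY : Rel2 (B, Y) (X, Y) := rel2_trans (rel2_fst ⟨b, rfl⟩) (rXi i0)
      have hBN : typ B = N := by
        rcases ptype_cases (typ B) with h | h | h | h
        · exact h
        · exact absurd hBP ((ihT rBY).c2 h hY).1
        · exact absurd hBP ((ihT rBY).c1 h hY).2
        · exact absurd hBP ((ihT rBY).c6 h hY)
      -- extract C
      rcases typ_add_N_elim hN2 with ⟨a, ha⟩ | ⟨d, hCP⟩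
      · exact (ihT (rel2_trans (rel2_fst ⟨a, rfl⟩) (rYj j0))).c10
          (O_all hX a) (O_all hY j0) ha
      set C := moveFn (moveFn Y j0) d with hCdef
      have rXC : Rel2 (X, C) (X, Y) := rel2_trans (rel2_snd ⟨d, rfl⟩) (rYj j0)
      have hCN : typ C = N := by
        rcases ptype_cases (typ C) with h | h | h | h
        · exact h
        · exact absurd hCP ((ihT rXC).c2 hX h).1
        · refine absurd hCP ?_
          rw [typ_add_comm]
          exact ((ihS rXC).c1 h hX).2
        · exact absurd hCP ((ihT rXC).c11 h)
      have rBC : Rel2 (B, C) (X, Y) :=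
        rel2_trans (rel2_snd ⟨d, rfl⟩) (rel2_trans (rel2_snd ⟨j0, rfl⟩) rBY)
      have hBC : typ (add B C) = N := by
        have h5 : typ (add B (moveFn Y j0)) = O := typ_add_P_right hBP j0
        exact typ_add_O_right h5 d
      rcases typ_add_N_elim hBC with ⟨β, h6⟩ | ⟨γ, h7⟩
      · set B' := moveFn B β with hB'def
        have rB'C : Rel2 (B', C) (X, Y) := rel2_trans (rel2_fst ⟨β, rfl⟩) rBC
        have hB'O : typ B' = O := by
          rcases ptype_cases (typ B') with h | h | h | h
          · exact absurd h6 ((ihT rB'C).c10 h hCN)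
          · exact h
          · exact absurd h6 ((ihT rB'C).c4 h hCN).1
          · exact absurd h6 ((ihT rB'C).c7 h hCN).2
        have h8 : typ (add B' Y) = O := typ_add_P_left hBP β
        exact ((ihT (rel2_trans (rel2_fst ⟨β, rfl⟩) rBY)).c2 hB'O hY).2 h8
      · set C' := moveFn C γ with hC'def
        have rBC' : Rel2 (B, C') (X, Y) := rel2_trans (rel2_snd ⟨γ, rfl⟩) rBC
        have hC'O : typ C' = O := by
          rcases ptype_cases (typ C') with h | h | h | h
          · refine absurd h7 ?_
            rw [typ_add_comm]
            exact ((ihS rBC').c10 h hBN)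
          · exact h
          · refine absurd h7 ?_
            rw [typ_add_comm]
            exact ((ihS rBC').c4 h hBN).1
          · refine absurd h7 ?_
            rw [typ_add_comm]
            exact ((ihS rBC').c7 h hBN).2
        have h9 : typ (add X C') = O := typ_add_P_right hCP γ
        exact ((ihT (rel2_trans (rel2_snd ⟨γ, rfl⟩) rXC)).c2 hX hC'O).2 h9
  -- c3 : N + O
  · intro hX hY
    obtain ⟨i, hi⟩ := N_opt hX
    exact typ_add_ne_O_left i ((ihT (rXi i)).c1 hi hY).1
  -- c4 : P + N
  · intro hX hY
    obtain ⟨j, hj⟩ := N_opt hY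
    constructor
    · exact typ_add_ne_P_right j ((ihT (rYj j)).c5 hX hj).2
    · exact typ_add_ne_O_right j ((ihT (rYj j)).c5 hX hj).1
  -- c5 : P + P
  · intro hX hY
    constructor
    · refine typ_add_ne_N (fun i => ?_) (fun j => ?_)
      · rw [typ_add_comm]
        exact ((ihS (rXi i)).c1 hY (P_all hX i)).2
      · exact ((ihT (rYj j)).c1 hX (P_all hY j)).2
    · intro hO
      rcases nonempty_add_elim (O_ne hO) with hi | hj
      · obtain ⟨i⟩ := hi
        have h2 := typ_add_O_left hO i
        refine absurd h2 ?_
        rw [typ_add_comm]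
        exact ((ihS (rXi i)).c1 hY (P_all hX i)).1
      · obtain ⟨j⟩ := hj
        exact ((ihT (rYj j)).c1 hX (P_all hY j)).1 (typ_add_O_right hO j)
  -- c6 : Q + O
  · intro hX hY
    obtain ⟨j⟩ := O_ne hY
    exact typ_add_ne_P_right j ((ihT (rYj j)).c7 hX (O_all hY j)).1
  -- c7 : Q + N
  · intro hX hY
    obtain ⟨j, hj⟩ := N_opt hY
    constructor
    · refine typ_add_ne_O_right j ?_
      rw [typ_add_comm]
      exact ((ihS (rYj j)).c8 hj hX).1
    · refine typ_add_ne_P_right j ?_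
      rw [typ_add_comm]
      exact ((ihS (rYj j)).c8 hj hX).2
  -- c8 : P + Q
  · intro hX hY
    constructor
    · refine typ_add_ne_N (fun i => ?_) (fun j => ?_)
      · exact (ihT (rXi i)).c11 hY
      · rcases ptype_cases (typ (moveFn Y j)) with h | h | h | h
        · exact ((ihT (rYj j)).c4 hX h).1
        · exact ((ihT (rYj j)).c1 hX h).2
        · exact absurd h (Q_noP hY j)
        · exact (ihT (rYj j)).c11 h
    · obtain ⟨j1, hj1⟩ := Q_exists_nonN hY
      refine typ_add_ne_O_right j1 ?_
      rcases ptype_cases (typ (moveFn Y j1)) with h | h | h | h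
      · exact absurd h hj1
      · exact ((ihT (rYj j1)).c1 hX h).1
      · exact absurd h (Q_noP hY j1)
      · exact ((ihT (rYj j1)).c8 hX h).1
  -- c9 : N + Q
  · intro hX hY
    obtain ⟨i, hi⟩ := N_opt hX
    exact typ_add_ne_O_left i ((ihT (rXi i)).c8 hi hY).1
  -- c10 : N + N
  · intro hX hY
    obtain ⟨i, hi⟩ := N_opt hX
    exact typ_add_ne_P_left i ((ihT (rXi i)).c4 hi hY).2
  -- c11 : ? + Q
  · intro hY
    intro hP
    obtain ⟨j1, hj1⟩ := Q_exists_nonO hY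
    have h1 : typ (add X (moveFn Y j1)) = O := typ_add_P_right hP j1
    have hj1' : typ (moveFn Y j1) = N ∨ typ (moveFn Y j1) = Q := by
      rcases ptype_cases (typ (moveFn Y j1)) with h | h | h | h
      · exact Or.inl h
      · exact absurd h hj1
      · exact absurd h (Q_noP hY j1)
      · exact Or.inr h
    rcases hj1' with hjN | hjQ
    · have hXN : typ X = N := by
        rcases ptype_cases (typ X) with h | h | h | h
        · exact h
        · refine absurd h1 ?_
          rw [typ_add_comm]
          exact (ihS (rYj j1)).c3 hjN h
        · exact absurd h1 ((ihT (rYj j1)).c4 h hjN).2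
        · exact absurd h1 ((ihT (rYj j1)).c7 h hjN).1
      obtain ⟨i, hi⟩ := N_opt hXN
      exact ((ihT (rXi i)).c8 hi hY).2 (typ_add_P_left hP i)
    · rcases ptype_cases (typ X) with h | h | h | h
      · obtain ⟨i, hi⟩ := N_opt h
        exact ((ihT (rXi i)).c8 hi hY).2 (typ_add_P_left hP i)
      · obtain ⟨i0⟩ := O_ne h
        exact (ihT (rXi i0)).c9 (O_all h i0) hY (typ_add_P_left hP i0)
      · exact ((ihT (rYj j1)).c8 h hjQ).2 h1
      · obtain ⟨i1, hi1⟩ := Q_exists_nonO h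
        have h2 : typ (add (moveFn X i1) Y) = O := typ_add_P_left hP i1
        have hi1Q : typ (moveFn X i1) = Q := by
          rcases ptype_cases (typ (moveFn X i1)) with h' | h' | h' | h'
          · exact absurd h2 ((ihT (rXi i1)).c9 h' hY)
          · exact absurd h' hi1
          · exact absurd h' (Q_noP h i1)
          · exact h'
        have h3 : typ (add (moveFn X i1) (moveFn Y j1)) = N := typ_add_O_left h1 i1
        exact (ihT (rel2_trans (rel2_fst ⟨i1, rfl⟩) (rYj j1))).c12 hi1Q hjQ h3
  -- c12 : Q + Q
  · intro hX hY
    refine typ_add_ne_N (fun i => ?_) (fun j => ?_)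
    · exact (ihT (rXi i)).c11 hY
    · rw [typ_add_comm]
      exact (ihS (rYj j)).c11 hX

theorem tbl_all (X Y : G3) : Tbl X Y := by
  have H : ∀ p : G3 × G3, Tbl p.1 p.2 ∧ Tbl p.2 p.1 := by
    intro p
    refine rel2_wf.induction (C := fun p => Tbl p.1 p.2 ∧ Tbl p.2 p.1) p ?_
    intro q IH0
    refine ⟨key q.1 q.2 (fun A B h => IH0 (A, B) h), key q.2 q.1 (fun A B h => ?_)⟩
    have h' := IH0 (B, A) (rel2_swap h)
    exact ⟨h'.2, h'.1⟩
  exact (H (X, Y)).1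

theorem O_treble_not_O (G : G3) (hG : typ G = PType.O) :
    typ (add (add G G) G) ≠ PType.O := by
  intro hT
  rcases ptype_cases (typ (add G G)) with hN | hO | hP | hQ
  · exact (tbl_all (add G G) G).c3 hN hG hT
  · exact ((tbl_all G G).c2 hG hG).2 hO
  · exact ((tbl_all G G).c2 hG hG).1 hP
  · obtain ⟨a⟩ := O_ne hG
    have hN1 : typ (add (add (moveFn G a) G) G) = N := typ3_O_opt1 hT a
    have hGa : typ (moveFn G a) = N := O_all hG a
    obtain ⟨bs, hA⟩ := N_opt hGa
    set A := moveFn (moveFn G a) bs with hAdef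
    have kill : ∀ c : moves G, typ (add (add A G) (moveFn G c)) = O → False := by
      intro c hO2
      rcases ptype_cases (typ (add A G)) with h | h | h | h
      · exact ((tbl_all A G).c1 hA hG).1 h
      · refine absurd hO2 ?_
        rw [typ_add_comm]
        exact (tbl_all (moveFn G c) (add A G)).c3 (O_all hG c) h
      · exact ((tbl_all A G).c1 hA hG).2 h
      · exact ((tbl_all (add A G) (moveFn G c)).c7 h (O_all hG c)).1 hO2
    rcases typ3_N_elim hN1 with ⟨b, hP1⟩ | ⟨c, hP2⟩ | ⟨c, hP3⟩
    · have hP1' : typ (add (moveFn (moveFn G a) b) (add G G)) = P := by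
        rw [← typ_add_assoc]
        exact hP1
      exact (tbl_all (moveFn (moveFn G a) b) (add G G)).c11 hQ hP1'
    · have hO1 : typ (add (add A (moveFn G c)) G) = O := typ3_P_opt1 hP2 bs
      have hO2 : typ (add (add A G) (moveFn G c)) = O := by
        rw [typ_add_rot]
        exact hO1
      exact kill c hO2
    · exact kill c (typ3_P_opt1 hP3 bs)

end G3
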